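/- Let G be a graph, π a linear order of V(G), and r a positive integer. For all vertices u, v with u <_π v, every path of length at most r connecting u and v intersects SReach_r[G,π,v] \ {v}. -/

import Mathlib

variable {V : Type*}

/-- `u` is strongly `r`-reachable from `v` w.r.t. the order `π`: `u ≤ v` and there is a
path of length at most `r` from `v` to `u` all of whose internal vertices are `> v`. -/
def SReach (G : SimpleGraph V) (π : LinearOrder V) (r : ℕ) (v : V) : Set V :=
  letI := π
  {u | u ≤ v ∧ ∃ p : G.Walk v u, p.IsPath ∧ p.length ≤ r ∧
      ∀ w ∈ p.support, w ≠ v → w ≠ u → v < w}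

lemma sreach_aux (G : SimpleGraph V) (π : LinearOrder V) (v : V) :
    ∀ {y u : V} (q : G.Walk y u), π.lt u v → ¬ π.lt y v →
    ∃ (w : V) (q₁ : G.Walk y w) (q₂ : G.Walk w u),
      π.lt w v ∧ q = q₁.append q₂ ∧ ∀ z ∈ q₁.support, z ≠ w → ¬ π.lt z v := by
  letI := π
  intro y u q
  induction q with
  | nil =>
    intro hu hy; exact absurd hu hy
  | @cons a b c h q' ih =>
    intro hu hy
    by_cases hx : b < v
    · refine ⟨b, SimpleGraph.Walk.cons h SimpleGraph.Walk.nil, q', hx, rfl, ?_⟩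
      intro z hz hzw
      simp only [SimpleGraph.Walk.support_cons, SimpleGraph.Walk.support_nil,
        List.mem_cons, List.mem_singleton] at hz
      rcases hz with rfl | hz
      · exact hy
      · rcases hz with rfl | hz
        · exact absurd rfl hzw
        · exact absurd hz List.not_mem_nil
    · obtain ⟨w, q₁, q₂, hwv, hq, hall⟩ := ih hu hx
      refine ⟨w, SimpleGraph.Walk.cons h q₁, q₂, hwv, by rw [hq]; rfl, ?_⟩
      intro z hz hzw
      simp only [SimpleGraph.Walk.support_cons, List.mem_cons] at hz
      rcases hz with rfl | hz
      · exact hy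
      · exact hall z hz hzw

theorem stmt2 (G : SimpleGraph V) (π : LinearOrder V) (r : ℕ) (hr : 0 < r)
    (u v : V) (huv : π.lt u v) (p : G.Walk u v) (hp : p.IsPath) (hlen : p.length ≤ r) :
    ∃ w ∈ p.support, w ∈ SReach G π r v ∧ w ≠ v := by
  letI := π
  obtain ⟨w, q₁, q₂, hwv, hq, hall⟩ :=
    sreach_aux G π v p.reverse huv (lt_irrefl v)
  have hq₁path : q₁.IsPath := by
    have : (q₁.append q₂).IsPath := hq ▸ hp.reverse
    exact this.of_append_left
  have hq₁len : q₁.length ≤ r := by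
    have : q₁.length + q₂.length = p.length := by
      rw [← SimpleGraph.Walk.length_append, ← hq, SimpleGraph.Walk.length_reverse]
    omega
  have hwsup : w ∈ p.support := by
    have : w ∈ p.reverse.support := by
      rw [hq]
      exact (SimpleGraph.Walk.mem_support_append_iff q₁ q₂).mpr (Or.inl q₁.end_mem_support)
    rwa [SimpleGraph.Walk.support_reverse, List.mem_reverse] at this
  refine ⟨w, hwsup, ⟨le_of_lt hwv, q₁, hq₁path, hq₁len, ?_⟩, ne_of_lt hwv⟩
  intro z hz hzv hzw
  exact lt_of_le_of_ne (not_lt.mp (hall z hz hzw)) (Ne.symm hzv)
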